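/- With subtractive loss over Z/mZ as above, the optimal denoiser with access to the full noisy sequence satisfies E[(1/n)Σ_{t=1}^n Λ(X_t, X̂^opt(Z^n))] ≥ φ^{-1}((1/n)·H(X^n | Z^n)). -/

import Mathlib

open Finset
open scoped Classical

noncomputable section

/-- Shannon entropy of a distribution on a finite type (natural log). -/
def ent {β : Type} [Fintype β] (u : β → ℝ) : ℝ :=
  ∑ b, Real.negMulLog (u b)

/-- `φ(D) = max { H(U) : U over ZMod m, E[ρ(U)] ≤ D }`. -/
def phi (m : ℕ) [NeZero m] (ρ : ZMod m → ℝ) (D : ℝ) : ℝ :=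
  sSup {h : ℝ | ∃ u : ZMod m → ℝ,
    (∀ i, 0 ≤ u i) ∧ (∑ i, u i = 1) ∧ (∑ i, u i * ρ i ≤ D) ∧ h = ent u}

/-- The inverse of `φ`: the least `D ≥ 0` with `φ(D) ≥ y`. -/
def phiInv (m : ℕ) [NeZero m] (ρ : ZMod m → ℝ) (y : ℝ) : ℝ :=
  sInf {D : ℝ | 0 ≤ D ∧ y ≤ phi m ρ D}

/-- Conditional entropy `H(X^n | Z^n)` under the joint law `μ`. -/
def condEntXZ {n m : ℕ} [NeZero m] {β : Type} [Fintype β]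
    (μ : (Fin n → ZMod m) × (Fin n → β) → ℝ) : ℝ :=
  -∑ x : Fin n → ZMod m, ∑ z : Fin n → β,
    μ (x, z) * Real.log (μ (x, z) / ∑ x' : Fin n → ZMod m, μ (x', z))

/-- Auxiliary: pointwise bound used to show entropy is at most `log card`. -/
lemma negMulLog_le_aux {c x : ℝ} (hc : 0 < c) (hx : 0 ≤ x) :
    Real.negMulLog x ≤ x * Real.log c + (c⁻¹ - x) := by
  rcases eq_or_lt_of_le hx with h | h
  · simp [← h, Real.negMulLog]
    positivity
  · have hxc : 0 < x * c := by positivity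
    have h1 : Real.log (x * c)⁻¹ ≤ (x * c)⁻¹ - 1 :=
      Real.log_le_sub_one_of_pos (by positivity)
    rw [Real.log_inv] at h1
    have h3 : Real.log (x * c) = Real.log x + Real.log c :=
      Real.log_mul h.ne' hc.ne'
    have h4 : x * (x * c)⁻¹ = c⁻¹ := by field_simp
    have h5 := mul_le_mul_of_nonneg_left
      (by linarith : 1 - (x * c)⁻¹ ≤ Real.log x + Real.log c) hx
    rw [Real.negMulLog]
    nlinarith

/-- Auxiliary: entropy of a distribution is at most `log` of the cardinality. -/
lemma ent_le_log' {γ : Type} [Fintype γ] [Nonempty γ] (u : γ → ℝ)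
    (h0 : ∀ b, 0 ≤ u b) (h1 : ∑ b, u b = 1) :
    (∑ b, Real.negMulLog (u b)) ≤ Real.log (Fintype.card γ) := by
  have hc : (0:ℝ) < Fintype.card γ := by
    exact_mod_cast Fintype.card_pos
  calc ∑ b, Real.negMulLog (u b)
      ≤ ∑ b, (u b * Real.log (Fintype.card γ) + (((Fintype.card γ : ℝ))⁻¹ - u b)) :=
        Finset.sum_le_sum fun b _ => negMulLog_le_aux hc (h0 b)
    _ = Real.log (Fintype.card γ) := by
        rw [Finset.sum_add_distrib, ← Finset.sum_mul, h1, Finset.sum_sub_distrib, h1]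
        simp [Finset.card_univ]

/-- with subtractive loss `Λ(x,x') = ρ(x − x')` over `ZMod m`
(`ρ(0) = 0`), any denoiser `X̂_t(Z^n)` with access to the full noisy sequence
satisfies `E[(1/n) ∑_t Λ(X_t, X̂_t(Z^n))] ≥ φ⁻¹((1/n) H(X^n | Z^n))`. -/
theorem full_sequence_entropy_lower_bound
    {n m : ℕ} [NeZero m] (hn : 0 < n) {β : Type} [Fintype β]
    (ρ : ZMod m → ℝ) (hρ0 : ∀ i, 0 ≤ ρ i) (hρz : ρ 0 = 0)
    (μ : (Fin n → ZMod m) × (Fin n → β) → ℝ)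
    (hμ0 : ∀ p, 0 ≤ μ p) (hμ1 : ∑ p, μ p = 1)
    (f : Fin n → (Fin n → β) → ZMod m) :
    phiInv m ρ ((n : ℝ)⁻¹ * condEntXZ μ)
      ≤ ∑ x : Fin n → ZMod m, ∑ z : Fin n → β,
          μ (x, z) * ((n : ℝ)⁻¹ * ∑ t, ρ (x t - f t z)) := by
  classical
  have hn' : ((n:ℝ)) ≠ 0 := Nat.cast_ne_zero.mpr hn.ne'
  have hnpos : (0:ℝ) < (n:ℝ) := by exact_mod_cast hn
  have hμ1' : ∑ x : Fin n → ZMod m, ∑ z : Fin n → β, μ (x, z) = 1 :=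
    (Fintype.sum_prod_type _).symm.trans hμ1
  -- the averaged error distribution
  set u : ZMod m → ℝ := fun a => (n:ℝ)⁻¹ *
      ∑ t, ∑ x : Fin n → ZMod m, ∑ z : Fin n → β,
        (if x t - f t z = a then μ (x, z) else 0) with hu_def
  -- key exchange identity
  have hkey : ∀ F : ZMod m → ℝ,
      ∑ a : ZMod m, (∑ t, ∑ x : Fin n → ZMod m, ∑ z : Fin n → β,
          (if x t - f t z = a then μ (x, z) else 0)) * F a
      = ∑ t, ∑ x : Fin n → ZMod m, ∑ z : Fin n → β,
          μ (x, z) * F (x t - f t z) := by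
    intro F
    simp only [Finset.sum_mul]
    rw [Finset.sum_comm]
    refine Finset.sum_congr rfl fun t _ => ?_
    rw [Finset.sum_comm]
    refine Finset.sum_congr rfl fun x _ => ?_
    rw [Finset.sum_comm]
    refine Finset.sum_congr rfl fun z _ => ?_
    simp [Finset.sum_ite_eq, ite_mul]
  have hswap : ∀ F : ZMod m → ℝ,
      ∑ t, ∑ x : Fin n → ZMod m, ∑ z : Fin n → β, μ (x, z) * F (x t - f t z)
      = ∑ x : Fin n → ZMod m, ∑ z : Fin n → β, μ (x, z) * ∑ t, F (x t - f t z) := by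
    intro F
    rw [Finset.sum_comm]
    refine Finset.sum_congr rfl fun x _ => ?_
    rw [Finset.sum_comm]
    refine Finset.sum_congr rfl fun z _ => ?_
    rw [← Finset.mul_sum]
  have hu0 : ∀ a, 0 ≤ u a := by
    intro a
    rw [hu_def]
    refine mul_nonneg (by positivity) ?_
    refine Finset.sum_nonneg fun t _ => Finset.sum_nonneg fun x _ =>
      Finset.sum_nonneg fun z _ => ?_
    split
    · exact hμ0 _
    · exact le_rfl
  have hu1 : ∑ a, u a = 1 := by
    have e1 : ∑ a, u a = (n:ℝ)⁻¹ * ∑ a : ZMod m,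
        (∑ t, ∑ x : Fin n → ZMod m, ∑ z : Fin n → β,
          (if x t - f t z = a then μ (x, z) else 0)) * (fun _ : ZMod m => (1:ℝ)) a := by
      rw [Finset.mul_sum]
      refine Finset.sum_congr rfl fun a _ => ?_
      rw [hu_def]; dsimp only; ring
    rw [e1, hkey (fun _ => 1)]
    simp only [mul_one]
    rw [Finset.sum_congr rfl fun t _ => hμ1']
    simp [Finset.sum_const, inv_mul_cancel₀ hn']
  -- lower bound for u on the support of μ
  have hu_lb : ∀ (t : Fin n) (x : Fin n → ZMod m) (z : Fin n → β),
      (n:ℝ)⁻¹ * μ (x, z) ≤ u (x t - f t z) := by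
    intro t x z
    have hS : μ (x, z) ≤ ∑ t', ∑ x' : Fin n → ZMod m, ∑ z' : Fin n → β,
        (if x' t' - f t' z' = x t - f t z then μ (x', z') else 0) := by
      have ite_nonneg : ∀ (t' : Fin n) (x' : Fin n → ZMod m) (z' : Fin n → β),
          (0:ℝ) ≤ (if x' t' - f t' z' = x t - f t z then μ (x', z') else 0) := by
        intro t' x' z'; split
        · exact hμ0 _
        · exact le_rfl
      have h1 : μ (x, z) ≤ ∑ z' : Fin n → β,
          (if x t - f t z' = x t - f t z then μ (x, z') else 0) := by
        have := Finset.single_le_sum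
          (f := fun z' => if x t - f t z' = x t - f t z then μ (x, z') else 0)
          (fun z' _ => ite_nonneg t x z') (Finset.mem_univ z)
        simpa using this
      have h2 : (∑ z' : Fin n → β, (if x t - f t z' = x t - f t z then μ (x, z') else 0))
          ≤ ∑ x' : Fin n → ZMod m, ∑ z' : Fin n → β,
            (if x' t - f t z' = x t - f t z then μ (x', z') else 0) :=
        Finset.single_le_sum
          (f := fun x' => ∑ z' : Fin n → β,
            (if x' t - f t z' = x t - f t z then μ (x', z') else 0))
          (fun x' _ => Finset.sum_nonneg fun z' _ => ite_nonneg t x' z')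
          (Finset.mem_univ x)
      have h3 : (∑ x' : Fin n → ZMod m, ∑ z' : Fin n → β,
            (if x' t - f t z' = x t - f t z then μ (x', z') else 0))
          ≤ ∑ t', ∑ x' : Fin n → ZMod m, ∑ z' : Fin n → β,
            (if x' t' - f t' z' = x t - f t z then μ (x', z') else 0) :=
        Finset.single_le_sum
          (f := fun t' => ∑ x' : Fin n → ZMod m, ∑ z' : Fin n → β,
            (if x' t' - f t' z' = x t - f t z then μ (x', z') else 0))
          (fun t' _ => Finset.sum_nonneg fun x' _ =>
            Finset.sum_nonneg fun z' _ => ite_nonneg t' x' z')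
          (Finset.mem_univ t)
      exact le_trans h1 (le_trans h2 h3)
    rw [hu_def]
    exact mul_le_mul_of_nonneg_left hS (by positivity)
  -- per-term Gibbs bound
  have key : ∀ (x : Fin n → ZMod m) (z : Fin n → β),
      μ (x, z) * ∑ t, Real.log (u (x t - f t z))
        - μ (x, z) * Real.log (μ (x, z) / ∑ x' : Fin n → ZMod m, μ (x', z))
      ≤ (∑ x' : Fin n → ZMod m, μ (x', z)) * ∏ t, u (x t - f t z) - μ (x, z) := by
    intro x z
    rcases eq_or_lt_of_le (hμ0 (x, z)) with h | h
    · rw [← h]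
      simp only [zero_mul, sub_zero, sub_self]
      have : (0:ℝ) ≤ (∑ x' : Fin n → ZMod m, μ (x', z)) * ∏ t, u (x t - f t z) :=
        mul_nonneg (Finset.sum_nonneg fun x' _ => hμ0 _)
          (Finset.prod_nonneg fun t _ => hu0 _)
      linarith
    · have hwz : 0 < ∑ x' : Fin n → ZMod m, μ (x', z) :=
        lt_of_lt_of_le h (Finset.single_le_sum
          (f := fun x' => μ (x', z)) (fun x' _ => hμ0 _) (Finset.mem_univ x))
      have hup : ∀ t, 0 < u (x t - f t z) := fun t =>
        lt_of_lt_of_le (by positivity) (hu_lb t x z)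
      have hprod : 0 < ∏ t, u (x t - f t z) := Finset.prod_pos fun t _ => hup t
      have hq : 0 < (∑ x' : Fin n → ZMod m, μ (x', z)) * ∏ t, u (x t - f t z) :=
        mul_pos hwz hprod
      have hlog : ∑ t, Real.log (u (x t - f t z))
            - Real.log (μ (x, z) / ∑ x' : Fin n → ZMod m, μ (x', z))
          = Real.log (((∑ x' : Fin n → ZMod m, μ (x', z)) * ∏ t, u (x t - f t z))
              / μ (x, z)) := by
        rw [Real.log_div hq.ne' h.ne', Real.log_mul hwz.ne' hprod.ne',
          Real.log_prod (fun t _ => (hup t).ne'),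
          Real.log_div h.ne' hwz.ne']
        ring
      rw [← mul_sub, hlog]
      calc μ (x, z) * Real.log (((∑ x' : Fin n → ZMod m, μ (x', z))
              * ∏ t, u (x t - f t z)) / μ (x, z))
          ≤ μ (x, z) * (((∑ x' : Fin n → ZMod m, μ (x', z))
              * ∏ t, u (x t - f t z)) / μ (x, z) - 1) :=
            mul_le_mul_of_nonneg_left
              (Real.log_le_sub_one_of_pos (by positivity)) h.le
        _ = (∑ x' : Fin n → ZMod m, μ (x', z)) * ∏ t, u (x t - f t z) - μ (x, z) := by
            field_simp
  -- total mass of the reference measure is 1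
  have hq1 : ∑ x : Fin n → ZMod m, ∑ z : Fin n → β,
      (∑ x' : Fin n → ZMod m, μ (x', z)) * ∏ t, u (x t - f t z) = 1 := by
    rw [Finset.sum_comm]
    have e2 : ∀ z : Fin n → β, ∑ x : Fin n → ZMod m,
        (∑ x' : Fin n → ZMod m, μ (x', z)) * ∏ t, u (x t - f t z)
        = ∑ x' : Fin n → ZMod m, μ (x', z) := by
      intro z
      rw [← Finset.mul_sum]
      have hps : ∑ x : Fin n → ZMod m, ∏ t, u (x t - f t z) = 1 := by
        rw [← Fintype.prod_sum (fun t (a : ZMod m) => u (a - f t z))]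
        have h1 : ∀ t : Fin n, ∑ a : ZMod m, u (a - f t z) = 1 := fun t =>
          (Fintype.sum_equiv (Equiv.subRight (f t z))
            (fun a => u (a - f t z)) u (fun a => rfl)).trans hu1
        rw [Finset.prod_congr rfl fun t _ => h1 t]
        simp
      rw [hps, mul_one]
    rw [Finset.sum_congr rfl fun z _ => e2 z, Finset.sum_comm]
    exact hμ1'
  -- identity: n · ent u as an expected log-likelihood
  have hnu : ∀ a, (n:ℝ) * u a = ∑ t, ∑ x : Fin n → ZMod m, ∑ z : Fin n → β,
      (if x t - f t z = a then μ (x, z) else 0) := by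
    intro a
    rw [hu_def]; dsimp only; rw [← mul_assoc, mul_inv_cancel₀ hn', one_mul]
  have hent : (n:ℝ) * ent u
      = -∑ x : Fin n → ZMod m, ∑ z : Fin n → β,
          μ (x, z) * ∑ t, Real.log (u (x t - f t z)) := by
    calc (n:ℝ) * ent u = ∑ a, (n:ℝ) * Real.negMulLog (u a) := by
          rw [ent, Finset.mul_sum]
      _ = ∑ a : ZMod m, -((∑ t, ∑ x : Fin n → ZMod m, ∑ z : Fin n → β,
            (if x t - f t z = a then μ (x, z) else 0)) * Real.log (u a)) := by
          refine Finset.sum_congr rfl fun a _ => ?_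
          rw [← hnu a, Real.negMulLog]
          ring
      _ = -∑ a : ZMod m, (∑ t, ∑ x : Fin n → ZMod m, ∑ z : Fin n → β,
            (if x t - f t z = a then μ (x, z) else 0)) * Real.log (u a) := by
          rw [Finset.sum_neg_distrib]
      _ = -∑ t, ∑ x : Fin n → ZMod m, ∑ z : Fin n → β,
            μ (x, z) * Real.log (u (x t - f t z)) := by
          rw [hkey (fun a => Real.log (u a))]
      _ = -∑ x : Fin n → ZMod m, ∑ z : Fin n → β,
            μ (x, z) * ∑ t, Real.log (u (x t - f t z)) := by
          rw [hswap (fun a => Real.log (u a))]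
  -- the main entropy inequality
  have main : condEntXZ μ ≤ (n:ℝ) * ent u := by
    rw [hent]
    unfold condEntXZ
    rw [neg_le_neg_iff]
    have hRL : ∑ x : Fin n → ZMod m, ∑ z : Fin n → β,
        (μ (x, z) * ∑ t, Real.log (u (x t - f t z))
          - μ (x, z) * Real.log (μ (x, z) / ∑ x' : Fin n → ZMod m, μ (x', z)))
        ≤ ∑ x : Fin n → ZMod m, ∑ z : Fin n → β,
          ((∑ x' : Fin n → ZMod m, μ (x', z)) * ∏ t, u (x t - f t z) - μ (x, z)) :=
      Finset.sum_le_sum fun x _ => Finset.sum_le_sum fun z _ => key x z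
    simp only [Finset.sum_sub_distrib] at hRL
    linarith [hq1, hμ1']
  -- expected distortion equals E_u[ρ]
  have hDρ : ∑ a, u a * ρ a
      = ∑ x : Fin n → ZMod m, ∑ z : Fin n → β,
          μ (x, z) * ((n : ℝ)⁻¹ * ∑ t, ρ (x t - f t z)) := by
    have e1 : ∑ a, u a * ρ a = (n:ℝ)⁻¹ * ∑ a : ZMod m,
        (∑ t, ∑ x : Fin n → ZMod m, ∑ z : Fin n → β,
          (if x t - f t z = a then μ (x, z) else 0)) * ρ a := by
      rw [Finset.mul_sum]
      refine Finset.sum_congr rfl fun a _ => ?_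
      rw [hu_def]; dsimp only; ring
    rw [e1, hkey ρ, hswap ρ, Finset.mul_sum]
    refine Finset.sum_congr rfl fun x _ => ?_
    rw [Finset.mul_sum]
    refine Finset.sum_congr rfl fun z _ => ?_
    ring
  -- final assembly
  have hDb0 : (0:ℝ) ≤ ∑ x : Fin n → ZMod m, ∑ z : Fin n → β,
      μ (x, z) * ((n : ℝ)⁻¹ * ∑ t, ρ (x t - f t z)) :=
    Finset.sum_nonneg fun x _ => Finset.sum_nonneg fun z _ =>
      mul_nonneg (hμ0 _) (mul_nonneg (by positivity)
        (Finset.sum_nonneg fun t _ => hρ0 _))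
  have hmem : ent u ∈ {h : ℝ | ∃ v : ZMod m → ℝ,
      (∀ i, 0 ≤ v i) ∧ (∑ i, v i = 1) ∧
      (∑ i, v i * ρ i ≤ ∑ x : Fin n → ZMod m, ∑ z : Fin n → β,
          μ (x, z) * ((n : ℝ)⁻¹ * ∑ t, ρ (x t - f t z))) ∧ h = ent v} :=
    ⟨u, hu0, hu1, le_of_eq hDρ, rfl⟩
  have hbdd : BddAbove {h : ℝ | ∃ v : ZMod m → ℝ,
      (∀ i, 0 ≤ v i) ∧ (∑ i, v i = 1) ∧
      (∑ i, v i * ρ i ≤ ∑ x : Fin n → ZMod m, ∑ z : Fin n → β,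
          μ (x, z) * ((n : ℝ)⁻¹ * ∑ t, ρ (x t - f t z))) ∧ h = ent v} := by
    refine ⟨Real.log m, ?_⟩
    rintro h ⟨v, h0, h1, -, rfl⟩
    simpa [ent, ZMod.card] using ent_le_log' v h0 h1
  have hyu : (n : ℝ)⁻¹ * condEntXZ μ ≤ ent u := by
    rw [inv_mul_le_iff₀ hnpos]
    exact main
  have hphi : (n : ℝ)⁻¹ * condEntXZ μ
      ≤ phi m ρ (∑ x : Fin n → ZMod m, ∑ z : Fin n → β,
          μ (x, z) * ((n : ℝ)⁻¹ * ∑ t, ρ (x t - f t z))) :=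
    le_trans hyu (le_csSup hbdd hmem)
  exact csInf_le ⟨0, fun d hd => hd.1⟩ ⟨hDb0, hphi⟩
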